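/- Let d ≥ 1, t > 0, and C > 0. There exist constants C₁* > 0 and C₂* > 0, depending only on d, t, and C, such that the following holds: for every integer N ≥ 1, every ε > 0, and all points γ₁, …, γ_N ∈ ℝ^d satisfying |γ_i − γ_j| ≥ C N^{−1/d} for all i ≠ j, one has (1/N) Σ_{i=1}^N ∫_0^t ∫_{|x| ≤ 2ε} (4πs)^{−d/2} exp(−|γ_i − x|²/(4s)) dx ds ≤ C₁* ε^d + C₂*/N. -/

import Mathlib

open MeasureTheory

lemma sep_count {d N : ℕ} (hd : 1 ≤ d) {δ : ℝ} (hδ : 0 < δ)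
    (γ : Fin N → EuclideanSpace ℝ (Fin d))
    (hsep : ∀ i j, i ≠ j → δ ≤ ‖γ i - γ j‖)
    (y : EuclideanSpace ℝ (Fin d)) {r : ℝ} (hr : 0 ≤ r)
    (S : Finset (Fin N)) (hS : ∀ i ∈ S, ‖γ i - y‖ ≤ r) :
    (S.card : ℝ) * (δ / 2) ^ d ≤ (r + δ) ^ d := by
  haveI : Nonempty (Fin d) := ⟨⟨0, hd⟩⟩
  set c : ENNReal := ENNReal.ofReal (Real.sqrt Real.pi ^ d / Real.Gamma (d / 2 + 1)) with hc
  have hcpos : 0 < Real.sqrt Real.pi ^ d / Real.Gamma (d / 2 + 1) := by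
    apply div_pos (pow_pos (Real.sqrt_pos.2 Real.pi_pos) d)
    exact Real.Gamma_pos_of_pos (by positivity)
  have hc0 : c ≠ 0 := by simp [hc, hcpos, ENNReal.ofReal_pos]
  have hctop : c ≠ ⊤ := ENNReal.ofReal_ne_top
  -- disjoint balls
  have hdisj : (↑S : Set (Fin N)).PairwiseDisjoint (fun i => Metric.ball (γ i) (δ / 2)) := by
    intro i _ j _ hij
    apply Metric.ball_disjoint_ball
    rw [dist_eq_norm]
    linarith [hsep i j hij]
  have hvol : ∀ i : Fin N, volume (Metric.ball (γ i) (δ / 2)) =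
      (ENNReal.ofReal ((δ / 2) ^ d)) * c := by
    intro i
    rw [EuclideanSpace.volume_ball, Fintype.card_fin, ENNReal.ofReal_pow (by positivity)]
  have hsub : (⋃ i ∈ S, Metric.ball (γ i) (δ / 2)) ⊆ Metric.ball y (r + δ) := by
    intro z hz
    simp only [Set.mem_iUnion] at hz
    obtain ⟨i, hiS, hzi⟩ := hz
    rw [Metric.mem_ball] at hzi ⊢
    have h1 : dist z y ≤ dist z (γ i) + dist (γ i) y := dist_triangle _ _ _
    have h2 : dist (γ i) y ≤ r := by rw [dist_eq_norm]; exact hS i hiS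
    linarith
  have key : (S.card : ENNReal) * ((ENNReal.ofReal ((δ / 2) ^ d)) * c)
      ≤ (ENNReal.ofReal ((r + δ) ^ d)) * c := by
    calc (S.card : ENNReal) * ((ENNReal.ofReal ((δ / 2) ^ d)) * c)
        = ∑ i ∈ S, volume (Metric.ball (γ i) (δ / 2)) := by
          simp [hvol, Finset.sum_const, mul_comm]
      _ = volume (⋃ i ∈ S, Metric.ball (γ i) (δ / 2)) :=
          (measure_biUnion_finset hdisj fun i _ => measurableSet_ball).symm
      _ ≤ volume (Metric.ball y (r + δ)) := measure_mono hsub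
      _ = (ENNReal.ofReal ((r + δ) ^ d)) * c := by
          rw [EuclideanSpace.volume_ball, Fintype.card_fin, ENNReal.ofReal_pow (by positivity)]
  rw [← mul_assoc, ENNReal.mul_le_mul_iff_left hc0 hctop, ← ENNReal.ofReal_natCast,
    ← ENNReal.ofReal_mul (by positivity)] at key
  exact (ENNReal.ofReal_le_ofReal_iff (by positivity)).1 key



lemma gauss_int (d : ℕ) {b : ℝ} (hb : 0 < b) :
    Integrable (fun y : EuclideanSpace ℝ (Fin d) => Real.exp (-b * ‖y‖ ^ 2)) := by
  have h := (GaussianFourier.integrable_cexp_neg_mul_sq_norm_add (V := EuclideanSpace ℝ (Fin d))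
      (b := (b : ℂ)) (by simpa using hb) 0 0).norm
  refine h.congr (by simp [Complex.norm_exp]; norm_cast)

-- the density function
noncomputable def gker (d : ℕ) (s : ℝ) (y : EuclideanSpace ℝ (Fin d)) : ℝ :=
  (4 * Real.pi * s) ^ (-(d : ℝ) / 2) * Real.exp (-‖y‖ ^ 2 / (4 * s))

lemma gker_eq (d : ℕ) {s : ℝ} (y : EuclideanSpace ℝ (Fin d)) :
    gker d s y = (4 * Real.pi * s) ^ (-(d : ℝ) / 2) * Real.exp (-(1 / (4 * s)) * ‖y‖ ^ 2) := by
  rw [gker]; ring_nf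

lemma gker_nonneg (d : ℕ) {s : ℝ} (hs : 0 < s) (y : EuclideanSpace ℝ (Fin d)) : 0 ≤ gker d s y := by
  have h : (0:ℝ) ≤ (4 * Real.pi * s) ^ (-(d : ℝ) / 2) :=
    Real.rpow_nonneg (by positivity) _
  rw [gker]; positivity

lemma gker_integrable (d : ℕ) {s : ℝ} (hs : 0 < s) : Integrable (gker d s) := by
  simp only [funext (gker_eq d)]
  exact (gauss_int d (by positivity)).const_mul _

lemma gker_integral (d : ℕ) {s : ℝ} (hs : 0 < s) :
    ∫ y : EuclideanSpace ℝ (Fin d), gker d s y = 1 := by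
  simp only [funext (gker_eq d)]
  rw [integral_const_mul, GaussianFourier.integral_rexp_neg_mul_sq_norm (by positivity)]
  have h1 : Real.pi / (1 / (4 * s)) = 4 * Real.pi * s := by field_simp
  have h2 : ((Module.finrank ℝ (EuclideanSpace ℝ (Fin d)) : ℝ) / 2) = (d : ℝ) / 2 := by
    rw [finrank_euclideanSpace_fin]
  rw [h1, h2, ← Real.rpow_add (by positivity)]
  rw [show -(d : ℝ) / 2 + (d : ℝ) / 2 = 0 by ring, Real.rpow_zero]

lemma inner_rewrite (d : ℕ) (s r : ℝ) (z : EuclideanSpace ℝ (Fin d)) :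
    ∫ x in Metric.closedBall (0 : EuclideanSpace ℝ (Fin d)) r, gker d s (z - x)
      = ∫ y, Set.indicator {w : EuclideanSpace ℝ (Fin d) | ‖z - w‖ ≤ r} (gker d s) y := by
  rw [← integral_indicator measurableSet_closedBall,
    ← integral_sub_left_eq_self (fun x => (Metric.closedBall (0 : EuclideanSpace ℝ (Fin d)) r).indicator
        (fun x => gker d s (z - x)) x) volume z]
  congr 1 with y
  classical
  rw [Set.indicator_apply, Set.indicator_apply]
  simp [mem_closedBall_zero_iff, sub_sub_cancel, Set.mem_setOf_eq]

lemma indicator_meas (d : ℕ) (r : ℝ) (z : EuclideanSpace ℝ (Fin d)) :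
    MeasurableSet {w : EuclideanSpace ℝ (Fin d) | ‖z - w‖ ≤ r} :=
  (isClosed_le (continuous_const.sub continuous_id).norm continuous_const).measurableSet

lemma inner_nonneg (d : ℕ) {s : ℝ} (hs : 0 < s) (r : ℝ) (z : EuclideanSpace ℝ (Fin d)) :
    0 ≤ ∫ x in Metric.closedBall (0 : EuclideanSpace ℝ (Fin d)) r, gker d s (z - x) := by
  apply setIntegral_nonneg measurableSet_closedBall
  exact fun x _ => gker_nonneg d hs _

lemma inner_le_one (d : ℕ) {s : ℝ} (hs : 0 < s) (r : ℝ) (z : EuclideanSpace ℝ (Fin d)) :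
    (∫ x in Metric.closedBall (0 : EuclideanSpace ℝ (Fin d)) r, gker d s (z - x)) ≤ 1 := by
  rw [inner_rewrite, ← gker_integral d hs]
  apply integral_mono ((gker_integrable d hs).indicator (indicator_meas d r z))
    (gker_integrable d hs)
  exact fun y => Set.indicator_le_self' (fun y _ => gker_nonneg d hs y) y

lemma sum_inner_le {d N : ℕ} (hd : 1 ≤ d) {δ ε s : ℝ} (hδ : 0 < δ) (hε : 0 < ε) (hs : 0 < s)
    (γ : Fin N → EuclideanSpace ℝ (Fin d))
    (hsep : ∀ i j, i ≠ j → δ ≤ ‖γ i - γ j‖) :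
    ∑ i, (∫ x in Metric.closedBall (0 : EuclideanSpace ℝ (Fin d)) (2 * ε), gker d s (γ i - x))
      ≤ (2 * ε + δ) ^ d / (δ / 2) ^ d := by
  classical
  simp only [inner_rewrite]
  rw [← integral_finset_sum _
    (fun i _ => (gker_integrable d hs).indicator (indicator_meas d (2 * ε) (γ i)))]
  have hM : 0 ≤ (2 * ε + δ) ^ d / (δ / 2) ^ d := by positivity
  calc (∫ y, ∑ i, Set.indicator {w | ‖γ i - w‖ ≤ 2 * ε} (gker d s) y)
      ≤ ∫ y, ((2 * ε + δ) ^ d / (δ / 2) ^ d) * gker d s y := by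
        apply integral_mono
          (integrable_finset_sum _ fun i _ =>
            (gker_integrable d hs).indicator (indicator_meas d (2 * ε) (γ i)))
          ((gker_integrable d hs).const_mul _)
        intro y
        have hcard : ∑ i, Set.indicator {w | ‖γ i - w‖ ≤ 2 * ε} (gker d s) y
            = ((Finset.univ.filter fun i => ‖γ i - y‖ ≤ 2 * ε).card : ℝ) * gker d s y := by
          simp only [Set.indicator_apply, Set.mem_setOf_eq]
          rw [← Finset.sum_filter, Finset.sum_const, nsmul_eq_mul]
        show (∑ i : Fin N, Set.indicator {w | ‖γ i - w‖ ≤ 2 * ε} (gker d s) y)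
            ≤ (2 * ε + δ) ^ d / (δ / 2) ^ d * gker d s y
        rw [hcard]
        exact mul_le_mul_of_nonneg_right
          ((le_div_iff₀ (by positivity)).2
            (sep_count hd hδ γ hsep y (by positivity) _
              (fun i hi => (Finset.mem_filter.1 hi).2)))
          (gker_nonneg d hs y)
      _ = (2 * ε + δ) ^ d / (δ / 2) ^ d := by
          rw [integral_const_mul, gker_integral d hs, mul_one]

lemma inner_meas (d : ℕ) (r t : ℝ) (z : EuclideanSpace ℝ (Fin d)) :
    AEStronglyMeasurable
      (fun s : ℝ => ∫ x in Metric.closedBall (0 : EuclideanSpace ℝ (Fin d)) r, gker d s (z - x))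
      (volume.restrict (Set.Ioc (0 : ℝ) t)) := by
  set F : ℝ → ℝ := fun s => ∫ x in Metric.closedBall (0 : EuclideanSpace ℝ (Fin d)) r,
    Real.exp (Real.log (4 * Real.pi * s) * (-(d : ℝ) / 2)) * Real.exp (-‖z - x‖ ^ 2 / (4 * s))
    with hF
  have hFm : StronglyMeasurable F := by
    apply StronglyMeasurable.integral_prod_right'
      (f := fun p : ℝ × EuclideanSpace ℝ (Fin d) =>
        Real.exp (Real.log (4 * Real.pi * p.1) * (-(d : ℝ) / 2))
          * Real.exp (-‖z - p.2‖ ^ 2 / (4 * p.1)))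
    apply Measurable.stronglyMeasurable
    have m1 : Measurable fun p : ℝ × EuclideanSpace ℝ (Fin d) =>
        Real.log (4 * Real.pi * p.1) * (-(d : ℝ) / 2) :=
      ((measurable_fst.const_mul (4 * Real.pi)).log).mul_const _
    have m2 : Measurable fun p : ℝ × EuclideanSpace ℝ (Fin d) => -‖z - p.2‖ ^ 2 / (4 * p.1) :=
      (((continuous_const.sub continuous_snd).norm.measurable.pow_const 2).neg).div
        (measurable_fst.const_mul 4)
    exact (m1.exp).mul (m2.exp)
  refine hFm.aestronglyMeasurable.congr ?_
  filter_upwards [self_mem_ae_restrict measurableSet_Ioc] with s hs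
  rw [hF]
  apply setIntegral_congr_fun measurableSet_closedBall
  intro x _
  show Real.exp (Real.log (4 * Real.pi * s) * (-(d : ℝ) / 2)) * Real.exp (-‖z - x‖ ^ 2 / (4 * s))
    = gker d s (z - x)
  rw [gker, ← Real.rpow_def_of_pos (by have := hs.1; positivity)]


/-- The Brownian-motion separation lemma (Lemma 4.2), analytic form: for points
`γ₁, …, γ_N` that are pairwise at Euclidean distance at least `C N^{-1/d}`, the
averaged heat-kernel occupation integrals over the ball of radius `2ε` are bounded by
`C₁* ε^d + C₂*/N`, with constants depending only on `d`, `t`, `C`. -/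
theorem brownian_separation_heat_kernel_bound (d : ℕ) (hd : 1 ≤ d)
    (t : ℝ) (ht : 0 < t) (C : ℝ) (hC : 0 < C) :
    ∃ C₁ > (0 : ℝ), ∃ C₂ > (0 : ℝ), ∀ N : ℕ, 1 ≤ N → ∀ ε : ℝ, 0 < ε →
      ∀ γ : Fin N → EuclideanSpace ℝ (Fin d),
        (∀ i j, i ≠ j → C * (N : ℝ) ^ (-(1 : ℝ) / d) ≤ ‖γ i - γ j‖) →
        (1 / N) * ∑ i, ∫ s in Set.Ioc (0 : ℝ) t,
            ∫ x in Metric.closedBall (0 : EuclideanSpace ℝ (Fin d)) (2 * ε),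
              (4 * Real.pi * s) ^ (-(d : ℝ) / 2) * Real.exp (-‖γ i - x‖ ^ 2 / (4 * s))
          ≤ C₁ * ε ^ d + C₂ / N := by
  refine ⟨t * 8 ^ d / C ^ d, by positivity, t * 4 ^ d, by positivity, ?_⟩
  intro N hN ε hε γ hsep
  have hN0 : (0 : ℝ) < N := by exact_mod_cast hN
  have hd0 : (d : ℝ) ≠ 0 := by positivity
  set δ : ℝ := C * (N : ℝ) ^ (-(1 : ℝ) / (d : ℝ)) with hδdef
  have hδ : 0 < δ := mul_pos hC (Real.rpow_pos_of_pos hN0 _)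
  have hδd : δ ^ d * N = C ^ d := by
    rw [hδdef, mul_pow, ← Real.rpow_natCast ((N : ℝ) ^ (-(1 : ℝ) / (d : ℝ))) d,
      ← Real.rpow_mul hN0.le, show (-(1 : ℝ) / (d : ℝ) * d) = -1 by field_simp,
      Real.rpow_neg_one]
    field_simp
  have hsep' : ∀ i j, i ≠ j → δ ≤ ‖γ i - γ j‖ := hsep
  -- rewrite integrand as gker
  have hrw : ∀ (i : Fin N) (s : ℝ),
      (∫ x in Metric.closedBall (0 : EuclideanSpace ℝ (Fin d)) (2 * ε),
        (4 * Real.pi * s) ^ (-(d : ℝ) / 2) * Real.exp (-‖γ i - x‖ ^ 2 / (4 * s)))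
      = ∫ x in Metric.closedBall (0 : EuclideanSpace ℝ (Fin d)) (2 * ε), gker d s (γ i - x) :=
    fun i s => rfl
  simp only [hrw]
  -- integrability in s
  have hint : ∀ i : Fin N, IntegrableOn
      (fun s => ∫ x in Metric.closedBall (0 : EuclideanSpace ℝ (Fin d)) (2 * ε),
        gker d s (γ i - x)) (Set.Ioc (0 : ℝ) t) := by
    intro i
    refine Integrable.mono' (integrable_const 1) (inner_meas d (2 * ε) t (γ i)) ?_
    filter_upwards [self_mem_ae_restrict measurableSet_Ioc] with s hs
    rw [Real.norm_eq_abs, abs_of_nonneg (inner_nonneg d hs.1 _ _)]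
    exact inner_le_one d hs.1 _ _
  set M : ℝ := (2 * ε + δ) ^ d / (δ / 2) ^ d with hM
  have hsum : (∑ i, ∫ s in Set.Ioc (0 : ℝ) t,
      ∫ x in Metric.closedBall (0 : EuclideanSpace ℝ (Fin d)) (2 * ε), gker d s (γ i - x))
      ≤ M * t := by
    calc (∑ i, ∫ s in Set.Ioc (0 : ℝ) t,
        ∫ x in Metric.closedBall (0 : EuclideanSpace ℝ (Fin d)) (2 * ε), gker d s (γ i - x))
        = ∫ s in Set.Ioc (0 : ℝ) t,
            ∑ i, ∫ x in Metric.closedBall (0 : EuclideanSpace ℝ (Fin d)) (2 * ε),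
              gker d s (γ i - x) := (integral_finset_sum _ (fun i _ => hint i)).symm
      _ ≤ ∫ _s in Set.Ioc (0 : ℝ) t, M :=
          setIntegral_mono_on (integrable_finset_sum _ fun i _ => hint i)
            (integrableOn_const measure_Ioc_lt_top.ne) measurableSet_Ioc
            (fun s hs => sum_inner_le hd hδ hε hs.1 γ hsep')
      _ = M * t := by
          rw [setIntegral_const, Real.volume_real_Ioc_of_le ht.le, smul_eq_mul]
          rw [mul_comm]
          ring_nf
  -- final arithmetic
  have hMle : M ≤ 8 ^ d * ε ^ d * N / C ^ d + 4 ^ d := by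
    have hmax : 2 * ε + δ ≤ 2 * max (2 * ε) δ := by
      have h1 := le_max_left (2 * ε) δ
      have h2 := le_max_right (2 * ε) δ
      linarith
    have hstep1 : (2 * ε + δ) ^ d ≤ 2 ^ d * ((2 * ε) ^ d + δ ^ d) := by
      calc (2 * ε + δ) ^ d ≤ (2 * max (2 * ε) δ) ^ d :=
            pow_le_pow_left₀ (by positivity) hmax d
        _ = 2 ^ d * (max (2 * ε) δ) ^ d := mul_pow _ _ _
        _ ≤ 2 ^ d * ((2 * ε) ^ d + δ ^ d) := by
            apply mul_le_mul_of_nonneg_left _ (by positivity)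
            rcases max_cases (2 * ε) δ with ⟨h, _⟩ | ⟨h, _⟩ <;> rw [h]
            · exact le_add_of_nonneg_right (by positivity)
            · exact le_add_of_nonneg_left (by positivity)
    rw [hM, div_le_iff₀ (by positivity)]
    have h4 : (4 : ℝ) ^ d = 2 ^ d * 2 ^ d := by rw [← mul_pow]; norm_num
    have h8 : (8 : ℝ) ^ d = 2 ^ d * 2 ^ d * 2 ^ d := by rw [← mul_pow, ← mul_pow]; norm_num
    have hCd : C ^ d = δ ^ d * N := hδd.symm
    have hrhs : (8 ^ d * ε ^ d * N / C ^ d + 4 ^ d) * (δ / 2) ^ d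
        = 2 ^ d * ((2 * ε) ^ d + δ ^ d) := by
      rw [hCd, h8, h4, div_pow, mul_pow]
      field_simp
      ring
    rw [hrhs]
    exact hstep1
  calc (1 / (N : ℝ)) * ∑ i, ∫ s in Set.Ioc (0 : ℝ) t,
        ∫ x in Metric.closedBall (0 : EuclideanSpace ℝ (Fin d)) (2 * ε), gker d s (γ i - x)
      ≤ (1 / (N : ℝ)) * (M * t) := by
        apply mul_le_mul_of_nonneg_left hsum (by positivity)
    _ ≤ (1 / (N : ℝ)) * ((8 ^ d * ε ^ d * N / C ^ d + 4 ^ d) * t) := by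
        apply mul_le_mul_of_nonneg_left (mul_le_mul_of_nonneg_right hMle ht.le) (by positivity)
    _ = t * 8 ^ d / C ^ d * ε ^ d + t * 4 ^ d / N := by
        field_simp
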